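/- Let p be a prime, a, b positive integers, and k ≥ 1 with 2k - 1 ≥ l. For every even l ≥ 2, D_{2k}·p^{a·l}·S_{2k-1-l}(p^a)·S_{l+1}(p^b) ≡ 0 (mod p^{a+b}), where S_r(N) = Σ_{s=1}^{N-1} s^r and D_{2k} is the denominator of B_{2k}. -/

import Mathlib

lemma key_two_mul_sum_dvd (N r : ℕ) (hr : Odd r) :
    (N : ℤ) ∣ 2 * ∑ s ∈ Finset.range N, (s : ℤ) ^ r := by
  rcases Nat.eq_zero_or_pos N with h | h
  · subst h; simp
  haveI : NeZero N := ⟨h.ne'⟩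
  have hcast : ((2 * ∑ s ∈ Finset.range N, (s : ℤ) ^ r : ℤ) : ZMod N) = 0 := by
    push_cast
    have h1 : ∑ s ∈ Finset.range N, (s : ZMod N) ^ r = ∑ x : ZMod N, x ^ r := by
      refine Finset.sum_nbij' (i := fun s : ℕ => (s : ZMod N)) (j := fun x : ZMod N => x.val)
        (fun s _ => Finset.mem_univ _)
        (fun x _ => Finset.mem_range.mpr (ZMod.val_lt x))
        (fun s hs => ZMod.val_cast_of_lt (Finset.mem_range.mp hs))
        (fun x _ => ZMod.natCast_rightInverse x)
        (fun s _ => rfl)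
    rw [h1]
    have h2 : ∑ x : ZMod N, x ^ r = ∑ x : ZMod N, (-x) ^ r :=
      (Equiv.sum_comp (Equiv.neg (ZMod N)) (fun x => x ^ r)).symm
    have h3 : ∑ x : ZMod N, (-x) ^ r = -∑ x : ZMod N, x ^ r := by
      simp [hr.neg_pow]
    have : ∑ x : ZMod N, x ^ r + ∑ x : ZMod N, x ^ r = 0 := by
      nth_rewrite 1 [h2, h3]; ring
    rw [two_mul, this]
  exact (ZMod.intCast_zmod_eq_zero_iff_dvd _ _).mp hcast

theorem even_l_term_vanish (p : ℕ) (hp : p.Prime) (a b : ℕ) (ha : 1 ≤ a) (hb : 1 ≤ b)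
    (k l : ℕ) (hk : 1 ≤ k) (hl2 : 2 ≤ l) (hle : l ≤ 2 * k - 1) (hl : Even l) :
    (p : ℤ) ^ (a + b) ∣
      ((bernoulli (2 * k)).den : ℤ) * (p : ℤ) ^ (a * l) *
        (∑ s ∈ Finset.range (p ^ a), (s : ℤ) ^ (2 * k - 1 - l)) *
        (∑ s ∈ Finset.range (p ^ b), (s : ℤ) ^ (l + 1)) := by
  set S2 : ℤ := ∑ s ∈ Finset.range (p ^ b), (s : ℤ) ^ (l + 1) with hS2
  have hodd : Odd (l + 1) := hl.add_one
  have hkey : (p : ℤ) ^ b ∣ 2 * S2 := by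
    have := key_two_mul_sum_dvd (p ^ b) (l + 1) hodd
    rwa [Nat.cast_pow] at this
  have hal : a + 1 ≤ a * l := by nlinarith
  have hmain : (p : ℤ) ^ (a + b) ∣ (p : ℤ) ^ (a * l) * S2 := by
    rcases eq_or_ne p 2 with hp2 | hp2
    · subst hp2
      obtain ⟨m, hm⟩ := hkey
      norm_num at hm
      have h2 : (2 : ℤ) * ((2:ℤ) ^ (a * l) * S2) = 2 ^ (a * l + b) * m := by
        rw [pow_add, mul_left_comm, hm]; ring
      have hdvd : (2 : ℤ) * (2:ℤ) ^ (a + b) ∣ (2:ℤ) * ((2:ℤ) ^ (a * l) * S2) := by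
        rw [h2]
        refine Dvd.dvd.mul_right ?_ m
        have : a + b + 1 ≤ a * l + b := by omega
        calc (2:ℤ) * 2 ^ (a + b) = 2 ^ (a + b + 1) := by ring
          _ ∣ 2 ^ (a * l + b) := pow_dvd_pow 2 this
      exact (mul_dvd_mul_iff_left (two_ne_zero)).mp hdvd
    · have hpodd : Odd p := hp.odd_of_ne_two hp2
      have hcop : IsCoprime ((p : ℤ) ^ b) 2 := by
        refine IsCoprime.pow_left ?_
        rw [Int.isCoprime_iff_gcd_eq_one, show (2:ℤ) = ((2:ℕ):ℤ) by norm_num,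
          Int.gcd_natCast_natCast]
        rcases hpodd with ⟨t, ht⟩
        have : p % 2 = 1 := by omega
        rw [Nat.gcd_comm, Nat.gcd_rec, this]
        rfl
      have hS : (p : ℤ) ^ b ∣ S2 := hcop.dvd_of_dvd_mul_left hkey
      rw [pow_add]
      exact mul_dvd_mul (pow_dvd_pow _ (le_trans (Nat.le_succ a) hal)) hS
  have : ((bernoulli (2 * k)).den : ℤ) * (p : ℤ) ^ (a * l) *
        (∑ s ∈ Finset.range (p ^ a), (s : ℤ) ^ (2 * k - 1 - l)) * S2
      = (((bernoulli (2 * k)).den : ℤ) *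
        (∑ s ∈ Finset.range (p ^ a), (s : ℤ) ^ (2 * k - 1 - l))) *
        ((p : ℤ) ^ (a * l) * S2) := by ring
  rw [this]
  exact hmain.mul_left _
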